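/- Let A be a finite nonempty set of positive integers. For all n, d, e ∈ ℕ: if d < fI(n) and e ≥ fII(n), then W_A^$(n;d,e) = II. -/

import Mathlib

/-- Standard NIM winner for the one-pile subtraction game with move set `A`:
`nimW A n = true` means Player I (the player to move) wins with `n` stones;
`nimW A n = false` means Player II wins.  (For `A` consisting of positive
integers this is exactly: Player I wins iff some `a ∈ A` with `a ≤ n` moves to
a Player-II-win position `n - a`.) -/
def nimW (A : Finset ℕ) : ℕ → Bool
  | n =>
    decide (((A.filter fun a => 0 < a ∧ a ≤ n).attach.filter (fun a =>
      nimW A (n - a.1) = false)).Nonempty)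
decreasing_by
  all_goals
    have h := a.2
    simp only [Finset.mem_filter] at h
    omega

/-- NIM-with-cash winner: `nimWC A n d e = true` means the player to move,
having `d` dollars while the opponent has `e` dollars, wins with `n` stones
on the board.  The player to move wins iff there is `a ∈ A` with `a ≤ n`
and `a ≤ d` such that the resulting position `(n - a; e, d - a)` is a loss
for the (new) player to move. -/
def nimWC (A : Finset ℕ) : ℕ → ℕ → ℕ → Bool
  | n, d, e =>
    decide (((A.filter fun a => 0 < a ∧ a ≤ n ∧ a ≤ d).attach.filter (fun a =>
      nimWC A (n - a.1) e (d - a.1) = false)).Nonempty)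
decreasing_by
  all_goals
    have h := a.2
    simp only [Finset.mem_filter] at h
    omega

/-- `fpair A n = (fI A n, fII A n)`, defined by simultaneous recursion:
for `n < min A` both are `0`; otherwise `fII n = max { fI (n-a) : a ∈ A, a ≤ n }`
(so in particular `fII n = 0` when there is no legal move), and
`fI n = min { fII (n-a) + a : a ∈ A, a ≤ n, nimW A (n-a) = false }` if `nimW A n`,
while `fI n = min { fII (n-a) + a : a ∈ A, a ≤ n, fI (n-a) = fII n }` otherwise. -/
def fpair (A : Finset ℕ) : ℕ → ℕ × ℕ
  | n =>
    let opts := (A.filter fun a => 0 < a ∧ a ≤ n).attach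
    let fIIn := (opts.image fun a => (fpair A (n - a.1)).1).max.unbotD 0
    (if nimW A n then
        ((opts.filter fun a => nimW A (n - a.1) = false).image
          fun a => (fpair A (n - a.1)).2 + a.1).min.untopD 0
      else
        ((opts.filter fun a => (fpair A (n - a.1)).1 = fIIn).image
          fun a => (fpair A (n - a.1)).2 + a.1).min.untopD 0,
     fIIn)
decreasing_by
  all_goals
    have h := a.2
    simp only [Finset.mem_filter] at h
    omega

/-- `fI A n`: the least amount of money the player to move needs to win
(richness threshold for Player I), as defined in the paper. -/
def fI (A : Finset ℕ) (n : ℕ) : ℕ := (fpair A n).1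

/-- `fII A n`: the richness threshold for the player not moving (Player II). -/
def fII (A : Finset ℕ) (n : ℕ) : ℕ := (fpair A n).2

namespace NimCashAux

lemma le_max_unbot' {s : Finset ℕ} {x : ℕ} (hx : x ∈ s) : x ≤ s.max.unbotD 0 := by
  obtain ⟨b, hb⟩ := s.max_of_mem hx
  have h := Finset.le_max hx
  rw [hb] at h ⊢
  rw [WithBot.unbotD_coe]
  exact_mod_cast h

lemma max_unbot'_mem {s : Finset ℕ} (hs : s.Nonempty) : s.max.unbotD 0 ∈ s := by
  obtain ⟨b, hb⟩ := s.max_of_nonempty hs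
  rw [hb, WithBot.unbotD_coe]
  exact s.mem_of_max hb

lemma min_untop'_le {s : Finset ℕ} {x : ℕ} (hx : x ∈ s) : s.min.untopD 0 ≤ x := by
  obtain ⟨b, hb⟩ := s.min_of_mem hx
  have h := Finset.min_le hx
  rw [hb] at h ⊢
  rw [WithTop.untopD_coe]
  exact_mod_cast h

lemma min_untop'_mem {s : Finset ℕ} (hs : s.Nonempty) : s.min.untopD 0 ∈ s := by
  obtain ⟨b, hb⟩ := s.min_of_nonempty hs
  rw [hb, WithTop.untopD_coe]
  exact s.mem_of_min hb

end NimCashAux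

open NimCashAux

lemma nimW_iff (A : Finset ℕ) (n : ℕ) :
    nimW A n = true ↔ ∃ a ∈ A, 0 < a ∧ a ≤ n ∧ nimW A (n - a) = false := by
  rw [nimW]
  simp only [decide_eq_true_eq, Finset.filter_nonempty_iff, Finset.mem_attach, true_and,
    Subtype.exists, Finset.mem_filter]
  constructor
  · rintro ⟨a, ⟨ha, h0, hn⟩, hw⟩; exact ⟨a, ha, h0, hn, hw⟩
  · rintro ⟨a, ha, h0, hn, hw⟩; exact ⟨a, ⟨ha, h0, hn⟩, hw⟩

lemma nimWC_iff (A : Finset ℕ) (n d e : ℕ) :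
    nimWC A n d e = true ↔ ∃ a ∈ A, 0 < a ∧ a ≤ n ∧ a ≤ d ∧ nimWC A (n - a) e (d - a) = false := by
  rw [nimWC]
  simp only [decide_eq_true_eq, Finset.filter_nonempty_iff, Finset.mem_attach, true_and,
    Subtype.exists, Finset.mem_filter]
  constructor
  · rintro ⟨a, ⟨ha, h0, hn, hd⟩, hw⟩; exact ⟨a, ha, h0, hn, hd, hw⟩
  · rintro ⟨a, ha, h0, hn, hd, hw⟩; exact ⟨a, ⟨ha, h0, hn, hd⟩, hw⟩

lemma nimWC_false_iff (A : Finset ℕ) (n d e : ℕ) :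
    nimWC A n d e = false ↔
      ∀ a ∈ A, 0 < a → a ≤ n → a ≤ d → nimWC A (n - a) e (d - a) = true := by
  rw [← Bool.not_eq_true, nimWC_iff]
  push_neg
  simp [Bool.not_eq_false]

lemma fI_fold (A : Finset ℕ) (n : ℕ) : (fpair A n).1 = fI A n := rfl
lemma fII_fold (A : Finset ℕ) (n : ℕ) : (fpair A n).2 = fII A n := rfl

lemma fII_eq (A : Finset ℕ) (n : ℕ) :
    fII A n = (((A.filter fun a => 0 < a ∧ a ≤ n).attach.image fun a =>
      fI A (n - a.1)).max).unbotD 0 := by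
  rw [fII, fpair]
  simp only [fI_fold]

lemma fI_eq_pos {A : Finset ℕ} {n : ℕ} (h : nimW A n = true) :
    fI A n = ((((A.filter fun a => 0 < a ∧ a ≤ n).attach.filter
      (fun a => nimW A (n - a.1) = false)).image fun a =>
      fII A (n - a.1) + a.1).min).untopD 0 := by
  rw [fI, fpair]
  simp only [h, if_true, fII_fold]

lemma fI_eq_neg {A : Finset ℕ} {n : ℕ} (h : nimW A n = false) :
    fI A n = ((((A.filter fun a => 0 < a ∧ a ≤ n).attach.filter
      (fun a => fI A (n - a.1) = fII A n)).image fun a =>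
      fII A (n - a.1) + a.1).min).untopD 0 := by
  conv_lhs => rw [fI, fpair]
  simp only [h, Bool.false_eq_true, if_false, fI_fold, fII_fold, ← fII_eq]

lemma le_fII {A : Finset ℕ} {n a : ℕ} (ha : a ∈ A) (h0 : 0 < a) (hn : a ≤ n) :
    fI A (n - a) ≤ fII A n := by
  rw [fII_eq]
  exact le_max_unbot' (Finset.mem_image_of_mem _
    (Finset.mem_attach _ ⟨a, Finset.mem_filter.2 ⟨ha, h0, hn⟩⟩))

lemma fII_attained {A : Finset ℕ} {n : ℕ} (h : ∃ a ∈ A, 0 < a ∧ a ≤ n) :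
    ∃ a ∈ A, 0 < a ∧ a ≤ n ∧ fI A (n - a) = fII A n := by
  obtain ⟨a, ha, h0, hn⟩ := h
  have hne : (((A.filter fun a => 0 < a ∧ a ≤ n).attach.image fun a =>
      fI A (n - a.1))).Nonempty :=
    ⟨_, Finset.mem_image_of_mem _ (Finset.mem_attach _ ⟨a, Finset.mem_filter.2 ⟨ha, h0, hn⟩⟩)⟩
  have hmem := max_unbot'_mem hne
  rw [← fII_eq] at hmem
  obtain ⟨⟨b, hb⟩, _, heq⟩ := Finset.mem_image.1 hmem
  have hb' := Finset.mem_filter.1 hb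
  exact ⟨b, hb'.1, hb'.2.1, hb'.2.2, heq⟩

lemma fI_le_pos {A : Finset ℕ} {n a : ℕ} (h : nimW A n = true) (ha : a ∈ A) (h0 : 0 < a)
    (hn : a ≤ n) (hw : nimW A (n - a) = false) : fI A n ≤ fII A (n - a) + a := by
  rw [fI_eq_pos h]
  exact min_untop'_le (Finset.mem_image_of_mem _ (Finset.mem_filter.2
    ⟨Finset.mem_attach _ ⟨a, Finset.mem_filter.2 ⟨ha, h0, hn⟩⟩, hw⟩))

lemma fI_spec_pos {A : Finset ℕ} {n : ℕ} (h : nimW A n = true) :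
    ∃ a ∈ A, 0 < a ∧ a ≤ n ∧ nimW A (n - a) = false ∧ fI A n = fII A (n - a) + a := by
  obtain ⟨a, ha, h0, hn, hw⟩ := (nimW_iff A n).1 h
  have hne : ((((A.filter fun a => 0 < a ∧ a ≤ n).attach.filter
      (fun a => nimW A (n - a.1) = false)).image fun a =>
      fII A (n - a.1) + a.1)).Nonempty :=
    ⟨_, Finset.mem_image_of_mem _ (Finset.mem_filter.2
      ⟨Finset.mem_attach _ ⟨a, Finset.mem_filter.2 ⟨ha, h0, hn⟩⟩, hw⟩)⟩
  have hmem := min_untop'_mem hne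
  rw [← fI_eq_pos h] at hmem
  obtain ⟨⟨b, hb⟩, hbmem, heq⟩ := Finset.mem_image.1 hmem
  have hb' := Finset.mem_filter.1 hb
  have hbw := (Finset.mem_filter.1 hbmem).2
  exact ⟨b, hb'.1, hb'.2.1, hb'.2.2, hbw, heq.symm⟩

lemma fI_spec_neg {A : Finset ℕ} {n : ℕ} (h : nimW A n = false)
    (hex : ∃ a ∈ A, 0 < a ∧ a ≤ n) :
    ∃ a ∈ A, 0 < a ∧ a ≤ n ∧ fI A (n - a) = fII A n ∧ fI A n = fII A (n - a) + a := by
  obtain ⟨a, ha, h0, hn, hmax⟩ := fII_attained hex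
  have hne : ((((A.filter fun a => 0 < a ∧ a ≤ n).attach.filter
      (fun a => fI A (n - a.1) = fII A n)).image fun a =>
      fII A (n - a.1) + a.1)).Nonempty :=
    ⟨_, Finset.mem_image_of_mem _ (Finset.mem_filter.2
      ⟨Finset.mem_attach _ ⟨a, Finset.mem_filter.2 ⟨ha, h0, hn⟩⟩, hmax⟩)⟩
  have hmem := min_untop'_mem hne
  rw [← fI_eq_neg h] at hmem
  obtain ⟨⟨b, hb⟩, hbmem, heq⟩ := Finset.mem_image.1 hmem
  have hb' := Finset.mem_filter.1 hb
  have hbw := (Finset.mem_filter.1 hbmem).2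
  exact ⟨b, hb'.1, hb'.2.1, hb'.2.2, hbw, heq.symm⟩

lemma fII_zero_of_empty {A : Finset ℕ} {n : ℕ} (h : ¬ ∃ a ∈ A, 0 < a ∧ a ≤ n) :
    fII A n = 0 := by
  rw [fII_eq]
  have : A.filter (fun a => 0 < a ∧ a ≤ n) = ∅ := by
    rw [Finset.filter_eq_empty_iff]
    intro a ha hcon
    exact h ⟨a, ha, hcon⟩
  rw [this]
  rfl

lemma main_ind (A : Finset ℕ) : ∀ n, ∀ d e : ℕ,
    (nimW A n = true → fI A n ≤ d → nimWC A n d e = true) ∧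
    (nimW A n = false → fII A n ≤ e → nimWC A n d e = false) ∧
    (nimW A n = true → d < fI A n → fII A n ≤ e → nimWC A n d e = false) ∧
    (nimW A n = false → fI A n ≤ d → e < fII A n → nimWC A n d e = true) := by
  intro n
  induction n using Nat.strong_induction_on with
  | _ n ih =>
    intro d e
    refine ⟨?_, ?_, ?_, ?_⟩
    · -- A: W = I, fI ≤ d ⟹ win
      intro hW hd
      obtain ⟨a, ha, h0, hn, hw, heq⟩ := fI_spec_pos hW
      refine (nimWC_iff A n d e).2 ⟨a, ha, h0, hn, by omega, ?_⟩
      exact ((ih (n - a) (by omega) e (d - a)).2.1) hw (by omega)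
    · -- B: W = II, fII ≤ e ⟹ lose
      intro hW he
      rw [nimWC_false_iff]
      intro a ha h0 hn had
      have hwa : nimW A (n - a) = true := by
        by_contra hcon
        rw [Bool.not_eq_true] at hcon
        exact absurd ((nimW_iff A n).2 ⟨a, ha, h0, hn, hcon⟩) (by simp [hW])
      have hfi : fI A (n - a) ≤ e := le_trans (le_fII ha h0 hn) he
      exact ((ih (n - a) (by omega) e (d - a)).1) hwa hfi
    · -- C: W = I, d < fI, fII ≤ e ⟹ lose
      intro hW hd he
      rw [nimWC_false_iff]
      intro a ha h0 hn had
      have hfi : fI A (n - a) ≤ e := le_trans (le_fII ha h0 hn) he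
      rcases Bool.eq_false_or_eq_true (nimW A (n - a)) with hwa | hwa
      · exact ((ih (n - a) (by omega) e (d - a)).1) hwa hfi
      · -- new position is a II-win: use D
        have hlt : fI A n ≤ fII A (n - a) + a := fI_le_pos hW ha h0 hn hwa
        exact ((ih (n - a) (by omega) e (d - a)).2.2.2) hwa hfi (by omega)
    · -- D: W = II, fI ≤ d, e < fII ⟹ win
      intro hW hd he
      have hex : ∃ a ∈ A, 0 < a ∧ a ≤ n := by
        by_contra hcon
        rw [fII_zero_of_empty hcon] at he
        omega
      obtain ⟨a, ha, h0, hn, hmax, heq⟩ := fI_spec_neg hW hex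
      refine (nimWC_iff A n d e).2 ⟨a, ha, h0, hn, by omega, ?_⟩
      rcases Bool.eq_false_or_eq_true (nimW A (n - a)) with hwa | hwa
      · exact ((ih (n - a) (by omega) e (d - a)).2.2.1) hwa (by omega) (by omega)
      · exact ((ih (n - a) (by omega) e (d - a)).2.1) hwa (by omega)


/-- If the player to move has fewer than `fI n` dollars and the
opponent has at least `fII n` dollars, the opponent wins NIM with cash. -/
theorem nimWC_rich_II (A : Finset ℕ) (hA : A.Nonempty) (hpos : ∀ a ∈ A, 0 < a)
    (n d e : ℕ) (hd : d < fI A n) (he : fII A n ≤ e) :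
    nimWC A n d e = false := by
  rcases Bool.eq_false_or_eq_true (nimW A n) with hW | hW
  · exact (main_ind A n d e).2.2.1 hW hd he
  · exact (main_ind A n d e).2.1 hW he
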